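/- The supremum over τ ∈ ℝ of g(τ) equals c₂² · max_{h ∈ [−1,1]} S(h). Moreover, if (d₁, c₁·d₄) ≠ (0, 0), then this maximum of S on [−1, 1] is attained at some interior point h* ∈ (−1, 1) satisfying P(h*) = 0 (S vanishes at h = ±1, and S′(h) = 2(1 − h²)P(h)). -/

import Mathlib

open Real Set

lemma my_tanh_eq (x : ℝ) :
    Real.tanh x = (Real.exp (2*x) - 1) / (Real.exp (2*x) + 1) := by
  rw [Real.tanh_eq_sinh_div_cosh, Real.sinh_eq, Real.cosh_eq,
    show (2:ℝ)*x = x + x by ring, Real.exp_add, Real.exp_neg]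
  have h := Real.exp_pos x
  have h2 : Real.exp x * Real.exp x + 1 > 0 := by positivity
  field_simp

lemma my_tanh_mem (x : ℝ) : Real.tanh x ∈ Set.Ioo (-1 : ℝ) 1 := by
  rw [my_tanh_eq]
  have h : (0:ℝ) < Real.exp (2*x) + 1 := by positivity
  constructor
  · rw [lt_div_iff₀ h]; linarith [Real.exp_pos (2*x)]
  · rw [div_lt_one h]; linarith

lemma my_tanh_surj {y : ℝ} (hy : y ∈ Set.Ioo (-1 : ℝ) 1) :
    ∃ x : ℝ, Real.tanh x = y := by
  obtain ⟨h1, h2⟩ := hy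
  have hy1 : (0:ℝ) < 1 + y := by linarith
  have hy2 : (0:ℝ) < 1 - y := by linarith
  have hq : (0:ℝ) < (1+y)/(1-y) := div_pos hy1 hy2
  refine ⟨Real.log ((1+y)/(1-y)) / 2, ?_⟩
  rw [my_tanh_eq, show 2 * (Real.log ((1+y)/(1-y)) / 2) = Real.log ((1+y)/(1-y)) by ring,
    Real.exp_log hq]
  rw [div_eq_iff (by positivity : ((1+y)/(1-y) + 1 : ℝ) ≠ 0)]
  field_simp
  ring

lemma my_hasDerivAt_tanh (x : ℝ) :
    HasDerivAt Real.tanh (1 - Real.tanh x ^ 2) x := by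
  have hc : 0 < Real.cosh x := Real.cosh_pos x
  have h := (Real.hasDerivAt_sinh x).div (Real.hasDerivAt_cosh x) hc.ne'
  have hfun : Real.tanh = fun y => Real.sinh y / Real.cosh y :=
    funext fun y => Real.tanh_eq_sinh_div_cosh y
  rw [hfun]
  refine h.congr_deriv ?_
  simp only [Real.tanh_eq_sinh_div_cosh]
  field_simp


/-- The supremum over `τ ∈ ℝ` of the squared acceleration magnitude
`g(τ) = v(τ)²·φ′(τ)² + v′(τ)²` of the sigmoid trajectory equals `c₂²` times the maximum of
`S(h) = (c₁·(d₁h + d₄)·(1 − h²))² + (d₁·(1 − h²))²` over `[−1, 1]`; moreover, if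
`(d₁, c₁·d₄) ≠ (0, 0)` this maximum is attained at an interior point `h* ∈ (−1, 1)` which
is a root of the cubic `P`. -/
theorem sup_sigmoid_acceleration_eq_max_S
    (c₁ c₂ c₃ c₄ d₁ d₄ : ℝ) (hc₂ : 0 < c₂)
    (φ v g S P : ℝ → ℝ)
    (hφ : ∀ τ, φ τ = c₁ * Real.tanh (c₂ * τ - c₃) + c₄)
    (hv : ∀ τ, v τ = d₁ * Real.tanh (c₂ * τ - c₃) + d₄)
    (hS : ∀ h, S h = (c₁ * (d₁ * h + d₄) * (1 - h ^ 2)) ^ 2 + (d₁ * (1 - h ^ 2)) ^ 2)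
    (hP : ∀ h, P h = -3 * c₁ ^ 2 * d₁ ^ 2 * h ^ 3 - 5 * c₁ ^ 2 * d₁ * d₄ * h ^ 2 +
      (c₁ ^ 2 * d₁ ^ 2 - 2 * c₁ ^ 2 * d₄ ^ 2 - 2 * d₁ ^ 2) * h + c₁ ^ 2 * d₁ * d₄)
    (hg : ∀ τ, g τ = (v τ) ^ 2 * (deriv φ τ) ^ 2 + (deriv v τ) ^ 2) :
    (⨆ τ : ℝ, g τ) = c₂ ^ 2 * sSup (S '' Set.Icc (-1 : ℝ) 1) ∧
    ((d₁, c₁ * d₄) ≠ (0, 0) →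
      ∃ hstar ∈ Set.Ioo (-1 : ℝ) 1,
        IsGreatest (S '' Set.Icc (-1 : ℝ) 1) (S hstar) ∧ P hstar = 0) := by
  have hSfun : S = fun h => (c₁ * (d₁ * h + d₄) * (1 - h ^ 2)) ^ 2 + (d₁ * (1 - h ^ 2)) ^ 2 :=
    funext hS
  -- derivatives of φ and v
  have hinner : ∀ τ : ℝ, HasDerivAt (fun τ : ℝ => c₂ * τ - c₃) c₂ τ := by
    intro τ
    simpa using ((hasDerivAt_id τ).const_mul c₂).sub_const c₃
  have hφd : ∀ τ, deriv φ τ = c₁ * c₂ * (1 - Real.tanh (c₂ * τ - c₃) ^ 2) := by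
    intro τ
    have h2 := (my_hasDerivAt_tanh (c₂ * τ - c₃)).comp τ (hinner τ)
    have h3 : HasDerivAt φ ((1 - Real.tanh (c₂ * τ - c₃) ^ 2) * c₂ * c₁) τ := by
      rw [funext hφ]
      simpa [Function.comp, mul_comm] using (h2.const_mul c₁).add_const c₄
    rw [h3.deriv]; ring
  have hvd : ∀ τ, deriv v τ = d₁ * c₂ * (1 - Real.tanh (c₂ * τ - c₃) ^ 2) := by
    intro τ
    have h2 := (my_hasDerivAt_tanh (c₂ * τ - c₃)).comp τ (hinner τ)
    have h3 : HasDerivAt v ((1 - Real.tanh (c₂ * τ - c₃) ^ 2) * c₂ * d₁) τ := by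
      rw [funext hv]
      simpa [Function.comp, mul_comm] using (h2.const_mul d₁).add_const d₄
    rw [h3.deriv]; ring
  have hgs : ∀ τ, g τ = c₂ ^ 2 * S (Real.tanh (c₂ * τ - c₃)) := by
    intro τ
    rw [hg, hv, hφd, hvd, hS]; ring
  -- derivative of S
  have hSd : ∀ x : ℝ, HasDerivAt S (2 * (1 - x ^ 2) * P x) x := by
    intro x
    have h2 : HasDerivAt (fun h : ℝ => 1 - h ^ 2) (-(2 * x)) x := by
      simpa using ((hasDerivAt_pow 2 x).const_sub 1)
    have h3 : HasDerivAt (fun h : ℝ => c₁ * (d₁ * h + d₄)) (c₁ * d₁) x := by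
      simpa using (((hasDerivAt_id x).const_mul d₁).add_const d₄).const_mul c₁
    have h6 := ((h3.mul h2).pow 2).add ((h2.const_mul d₁).pow 2)
    rw [hSfun]
    refine h6.congr_deriv ?_
    rw [hP]; simp only [Pi.mul_apply]; ring
  have hScont : Continuous S := by rw [hSfun]; continuity
  have hSnn : ∀ h : ℝ, 0 ≤ S h := fun h => by rw [hS]; positivity
  obtain ⟨h₀, h₀mem, h₀max0⟩ := isCompact_Icc.exists_isMaxOn
    (Set.nonempty_Icc.mpr (by norm_num : (-1:ℝ) ≤ 1)) hScont.continuousOn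
  have h₀max := isMaxOn_iff.mp h₀max0
  obtain ⟨hstar, hstarIoo, hstarmax0⟩ :
      ∃ hs ∈ Set.Ioo (-1 : ℝ) 1, IsMaxOn S (Set.Icc (-1 : ℝ) 1) hs := by
    by_cases hint : h₀ ∈ Set.Ioo (-1 : ℝ) 1
    · exact ⟨h₀, hint, h₀max0⟩
    · have hb : h₀ = -1 ∨ h₀ = 1 := by
        simp only [Set.mem_Ioo, not_and_or, not_lt] at hint
        rcases hint with h | h
        · exact Or.inl (le_antisymm h h₀mem.1)
        · exact Or.inr (le_antisymm h₀mem.2 h)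
      have hz : S h₀ = 0 := by rcases hb with h | h <;> rw [h, hS] <;> norm_num
      have h0mem : (0:ℝ) ∈ Set.Icc (-1:ℝ) 1 := by norm_num
      have hS0 : S 0 = 0 := le_antisymm (hz ▸ h₀max 0 h0mem) (hSnn 0)
      refine ⟨0, by norm_num, isMaxOn_iff.mpr fun y hy => ?_⟩
      calc S y ≤ S h₀ := h₀max y hy
        _ = S 0 := by rw [hz, hS0]
  have hstarmax := isMaxOn_iff.mp hstarmax0
  have hGreatest : IsGreatest (S '' Set.Icc (-1 : ℝ) 1) (S hstar) := by
    constructor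
    · exact ⟨hstar, Set.Ioo_subset_Icc_self hstarIoo, rfl⟩
    · rintro y ⟨z, hz, rfl⟩; exact hstarmax z hz
  have hMeq : sSup (S '' Set.Icc (-1 : ℝ) 1) = S hstar := hGreatest.csSup_eq
  constructor
  · rw [hMeq]
    have hub : ∀ τ, g τ ≤ c₂ ^ 2 * S hstar := by
      intro τ
      rw [hgs]
      exact mul_le_mul_of_nonneg_left
        (hstarmax _ (Set.Ioo_subset_Icc_self (my_tanh_mem _))) (sq_nonneg c₂)
    have hbdd : BddAbove (Set.range g) := ⟨c₂ ^ 2 * S hstar, by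
      rintro y ⟨τ, rfl⟩; exact hub τ⟩
    refine le_antisymm (ciSup_le hub) ?_
    obtain ⟨u, hu⟩ := my_tanh_surj hstarIoo
    refine le_ciSup_of_le hbdd ((c₃ + u) / c₂) ?_
    rw [hgs, show c₂ * ((c₃ + u) / c₂) - c₃ = u by field_simp; ring, hu]
  · intro _
    refine ⟨hstar, hstarIoo, hGreatest, ?_⟩
    have hloc : IsLocalMax S hstar :=
      hstarmax0.isLocalMax (Icc_mem_nhds hstarIoo.1 hstarIoo.2)
    have hd0 := hloc.deriv_eq_zero
    rw [(hSd hstar).deriv] at hd0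
    have h1 : 0 < 1 - hstar ^ 2 := by nlinarith [hstarIoo.1, hstarIoo.2]
    rcases mul_eq_zero.mp hd0 with h | h
    · exact absurd h (by positivity)
    · exact h
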